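/- For all positive integers $a,b$, the sets $D_1=\{0,1,\dots,a-1\}$ and $D_2=\{a,2a,\dots,ba\}$ in $\mathbb{Z}_{ab+1}$ form a $(ab+1,2;a,b;1,1)$-GSEDF; i.e., every nonzero element of $\mathbb{Z}_{ab+1}$ can be written uniquely as $d_1-d_2$ with $d_1\in D_1, d_2\in D_2$, and uniquely as $d_2-d_1$. -/

import Mathlib

/-- The number of times `g` occurs in the multiset `Δ(A,B) = {x - y : x ∈ A, y ∈ B}`. -/
noncomputable def extDiffCount {G : Type*} [AddCommGroup G] (A B : Finset G) (g : G) : ℕ :=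
  letI := Classical.decEq G
  ((A ×ˢ B).filter (fun p => p.1 - p.2 = g)).card

/-- `{D i}` is a `(v, m; k₁,…,k_m; λ₁,…,λ_m)`-GSEDF in the finite abelian group `G`. -/
def IsGSEDF {G : Type*} [AddCommGroup G] [Fintype G] (v m : ℕ)
    (D : Fin m → Finset G) (k lam : Fin m → ℕ) : Prop :=
  Fintype.card G = v ∧
  (∀ i, (D i).card = k i) ∧
  (∀ i, 0 < k i) ∧ (∀ i, 0 < lam i) ∧
  (∀ i j, i ≠ j → Disjoint (D i) (D j)) ∧
  ∀ i, ∀ g : G, g ≠ 0 →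
    (∑ j ∈ Finset.univ.filter (· ≠ i), extDiffCount (D i) (D j) g) = lam i

/- ### Auxiliary lemmas -/

lemma extDiffCount_eq {G : Type*} [AddCommGroup G] [DecidableEq G] (A B : Finset G) (g : G) :
    extDiffCount A B g = ((A ×ˢ B).filter (fun p => p.1 - p.2 = g)).card := by
  unfold extDiffCount
  congr

lemma unique_div {a x x' c c' : ℕ} (ha : 0 < a) (hx : x < a) (hx' : x' < a)
    (h : x + c * a = x' + c' * a) : x = x' ∧ c = c' := by
  constructor
  · have h1 := congrArg (· % a) h
    simpa [Nat.add_mul_mod_self_right, Nat.mod_eq_of_lt hx, Nat.mod_eq_of_lt hx'] using h1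
  · have h2 := congrArg (· / a) h
    simpa [Nat.add_mul_div_right _ _ ha, Nat.div_eq_of_lt hx, Nat.div_eq_of_lt hx'] using h2

lemma filter_card_one {α β : Type*} [DecidableEq β] {s : Finset α} {f : α → β}
    (hinj : Set.InjOn f s) {p : α} (hp : p ∈ s) :
    (s.filter (fun x => f x = f p)).card = 1 := by
  rw [Finset.card_eq_one]
  refine ⟨p, ?_⟩
  ext q
  simp only [Finset.mem_filter, Finset.mem_singleton]
  constructor
  · rintro ⟨hq, he⟩; exact hinj hq hp he
  · rintro rfl; exact ⟨hp, rfl⟩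

lemma image_eq_erase_zero {α β : Type*} [DecidableEq β] [Fintype β] [Zero β]
    {s : Finset α} {f : α → β}
    (hinj : Set.InjOn f s) (h0 : ∀ x ∈ s, f x ≠ 0) (hcard : s.card = Fintype.card β - 1) :
    s.image f = Finset.univ.erase 0 := by
  apply Finset.eq_of_subset_of_card_le
  · intro y hy
    simp only [Finset.mem_image] at hy
    obtain ⟨x, hx, rfl⟩ := hy
    exact Finset.mem_erase.2 ⟨h0 x hx, Finset.mem_univ _⟩
  · rw [Finset.card_erase_of_mem (Finset.mem_univ 0), Finset.card_univ,
      Finset.card_image_of_injOn hinj, hcard]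

lemma prod_image {α β γ δ : Type*} [DecidableEq γ] [DecidableEq δ]
    (s : Finset α) (t : Finset β) (f : α → γ) (g : β → δ) :
    (s.image f) ×ˢ (t.image g) = (s ×ˢ t).image (Prod.map f g) := by
  ext ⟨x, y⟩
  simp only [Finset.mem_product, Finset.mem_image, Finset.mem_product, Prod.map, Prod.ext_iff,
    Prod.exists]
  constructor
  · rintro ⟨⟨u, hu, rfl⟩, ⟨v, hv, rfl⟩⟩
    exact ⟨u, v, ⟨hu, hv⟩, rfl, rfl⟩
  · rintro ⟨u, v, ⟨hu, hv⟩, rfl, rfl⟩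
    exact ⟨⟨u, hu, rfl⟩, ⟨v, hv, rfl⟩⟩

section Main

variable {a b : ℕ}

/-- the nat representing `x - i*a` in `ZMod (a*b+1)` -/
def psi (a b : ℕ) (p : ℕ × ℕ) : ℕ := p.1 + (b - p.2) * a + 1

/-- the nat representing `i*a - x` in `ZMod (a*b+1)` -/
def phi (a : ℕ) (p : ℕ × ℕ) : ℕ := p.1 * a - p.2

lemma psi_bounds (ha : 0 < a) {p : ℕ × ℕ}
    (hp : p ∈ (Finset.range a) ×ˢ (Finset.Icc 1 b)) :
    1 ≤ psi a b p ∧ psi a b p ≤ a * b := by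
  simp only [Finset.mem_product, Finset.mem_range, Finset.mem_Icc] at hp
  obtain ⟨h1, h2, h3⟩ := hp
  have hle : (b - p.2) * a ≤ (b - 1) * a := Nat.mul_le_mul_right a (by omega)
  have hb1 : b - 1 + 1 = b := by omega
  have he : (b - 1) * a + a = b * a := by
    calc (b - 1) * a + a = ((b - 1) + 1) * a := by ring
      _ = b * a := by rw [hb1]
  have : b * a = a * b := Nat.mul_comm b a
  unfold psi
  omega

lemma phi_bounds (ha : 0 < a) {p : ℕ × ℕ}
    (hp : p ∈ (Finset.Icc 1 b) ×ˢ (Finset.range a)) :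
    1 ≤ phi a p ∧ phi a p ≤ a * b ∧ p.2 ≤ p.1 * a := by
  simp only [Finset.mem_product, Finset.mem_range, Finset.mem_Icc] at hp
  obtain ⟨⟨h1, h2⟩, h3⟩ := hp
  have hge : a ≤ p.1 * a := Nat.le_mul_of_pos_left a h1
  have hle : p.1 * a ≤ b * a := Nat.mul_le_mul_right a h2
  have : b * a = a * b := Nat.mul_comm b a
  unfold phi
  omega

lemma psi_inj (ha : 0 < a) :
    Set.InjOn (psi a b) (((Finset.range a) ×ˢ (Finset.Icc 1 b) : Finset (ℕ × ℕ)) : Set (ℕ × ℕ)) := by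
  rintro ⟨x, i⟩ hp ⟨x', i'⟩ hq h
  simp only [Finset.coe_product, Set.mem_prod, Finset.mem_coe, Finset.mem_range,
    Finset.mem_Icc] at hp hq
  unfold psi at h
  simp only at h
  have h' : x + (b - i) * a = x' + (b - i') * a := by omega
  obtain ⟨he1, he2⟩ := unique_div ha hp.1 hq.1 h'
  have : i = i' := by omega
  simp [he1, this]

lemma phi_inj (ha : 0 < a) :
    Set.InjOn (phi a) (((Finset.Icc 1 b) ×ˢ (Finset.range a) : Finset (ℕ × ℕ)) : Set (ℕ × ℕ)) := by
  rintro ⟨i, x⟩ hp ⟨i', x'⟩ hq h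
  simp only [Finset.coe_product, Set.mem_prod, Finset.mem_coe, Finset.mem_range,
    Finset.mem_Icc] at hp hq
  unfold phi at h
  simp only at h
  have hx : x ≤ i * a := le_trans (le_of_lt hp.2) (Nat.le_mul_of_pos_left a hp.1.1)
  have hx' : x' ≤ i' * a := le_trans (le_of_lt hq.2) (Nat.le_mul_of_pos_left a hq.1.1)
  have key : x' + i * a = x + i' * a := by
    set u := i * a with hu
    set v := i' * a with hv
    omega
  obtain ⟨he1, he2⟩ := unique_div ha hq.2 hp.2 key
  simp [he1, he2]

end Main

lemma cast_inj_of_lt {n : ℕ} [NeZero n] {x y : ℕ} (hx : x < n) (hy : y < n)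
    (h : (x : ZMod n) = y) : x = y := by
  have := congrArg ZMod.val h
  rwa [ZMod.val_cast_of_lt hx, ZMod.val_cast_of_lt hy] at this

lemma count12 (a b : ℕ) (ha : 0 < a) (hb : 0 < b) (g : ZMod (a * b + 1)) (hg : g ≠ 0) :
    extDiffCount ((Finset.range a).image (Nat.cast : ℕ → ZMod (a * b + 1)))
      ((Finset.Icc 1 b).image (fun i => ((i * a : ℕ) : ZMod (a * b + 1)))) g = 1 := by
  rw [extDiffCount_eq, prod_image]
  set S := (Finset.range a) ×ˢ (Finset.Icc 1 b) with hS
  set F : ℕ × ℕ → ZMod (a * b + 1) × ZMod (a * b + 1) :=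
    Prod.map (Nat.cast : ℕ → ZMod (a * b + 1)) (fun i => ((i * a : ℕ) : ZMod (a * b + 1))) with hF
  have hmem : ∀ p ∈ S, p.1 < a ∧ 1 ≤ p.2 ∧ p.2 ≤ b := by
    intro p hp
    simp only [hS, Finset.mem_product, Finset.mem_range, Finset.mem_Icc] at hp
    exact ⟨hp.1, hp.2.1, hp.2.2⟩
  have hFinj : Set.InjOn F S := by
    rintro p hp q hq h
    have hp' := hmem p hp
    have hq' := hmem q hq
    simp only [hF, Prod.map, Prod.ext_iff] at h
    have h1 : p.1 = q.1 := cast_inj_of_lt (by nlinarith [hp'.1]) (by nlinarith [hq'.1]) h.1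
    have h2 : p.2 * a = q.2 * a := cast_inj_of_lt
      (by nlinarith [hp'.2.2]) (by nlinarith [hq'.2.2]) h.2
    have h3 : p.2 = q.2 := Nat.eq_of_mul_eq_mul_right ha h2
    exact Prod.ext h1 h3
  rw [Finset.filter_image, Finset.card_image_of_injOn
    (hFinj.mono (by exact_mod_cast Finset.filter_subset _ S))]
  -- rewrite the condition using psi
  set f : ℕ × ℕ → ZMod (a * b + 1) := fun p => ((psi a b p : ℕ) : ZMod (a * b + 1)) with hf
  have hcond : ∀ p ∈ S, ((F p).1 - (F p).2 = g ↔ f p = g) := by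
    intro p hp
    obtain ⟨h1, h2, h3⟩ := hmem p hp
    have key : psi a b p + p.2 * a = p.1 + (a * b + 1) := by
      unfold psi
      have : (b - p.2) * a + p.2 * a = b * a := by
        rw [← Nat.add_mul, Nat.sub_add_cancel h3]
      have hba : b * a = a * b := Nat.mul_comm b a
      omega
    have : ((psi a b p : ℕ) : ZMod (a * b + 1)) + ((p.2 * a : ℕ) : ZMod (a * b + 1))
        = ((p.1 : ℕ) : ZMod (a * b + 1)) := by
      rw [← Nat.cast_add, key, Nat.cast_add, ZMod.natCast_self, add_zero]
    constructor
    · intro h; rw [← h]; simp only [hF, Prod.map, hf]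
      rw [← this]; ring
    · intro h; rw [← h]; simp only [hF, Prod.map, hf]
      rw [← this]; ring
  rw [Finset.filter_congr hcond]
  -- now count preimages of g under f
  have hpsilt : ∀ p ∈ S, psi a b p < a * b + 1 ∧ 1 ≤ psi a b p := by
    intro p hp
    have := psi_bounds ha hp
    omega
  have hfinj : Set.InjOn f S := by
    intro p hp q hq h
    exact psi_inj ha hp hq
      (cast_inj_of_lt (hpsilt p hp).1 (hpsilt q hq).1 h)
  have hf0 : ∀ p ∈ S, f p ≠ 0 := by
    intro p hp h
    have h0 : psi a b p = 0 :=
      cast_inj_of_lt (hpsilt p hp).1 (by omega) (by simpa using h)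
    have := (hpsilt p hp).2
    omega
  have hcardS : S.card = Fintype.card (ZMod (a * b + 1)) - 1 := by
    rw [ZMod.card]
    simp [hS, Finset.card_product]
  have himg : S.image f = Finset.univ.erase 0 := image_eq_erase_zero hfinj hf0 hcardS
  have hgmem : g ∈ S.image f := by
    rw [himg]
    exact Finset.mem_erase.2 ⟨hg, Finset.mem_univ _⟩
  obtain ⟨p, hp, hpg⟩ := Finset.mem_image.1 hgmem
  rw [← hpg]
  exact filter_card_one hfinj hp

lemma count21 (a b : ℕ) (ha : 0 < a) (hb : 0 < b) (g : ZMod (a * b + 1)) (hg : g ≠ 0) :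
    extDiffCount ((Finset.Icc 1 b).image (fun i => ((i * a : ℕ) : ZMod (a * b + 1))))
      ((Finset.range a).image (Nat.cast : ℕ → ZMod (a * b + 1))) g = 1 := by
  rw [extDiffCount_eq, prod_image]
  set S := (Finset.Icc 1 b) ×ˢ (Finset.range a) with hS
  set F : ℕ × ℕ → ZMod (a * b + 1) × ZMod (a * b + 1) :=
    Prod.map (fun i => ((i * a : ℕ) : ZMod (a * b + 1))) (Nat.cast : ℕ → ZMod (a * b + 1)) with hF
  have hmem : ∀ p ∈ S, 1 ≤ p.1 ∧ p.1 ≤ b ∧ p.2 < a := by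
    intro p hp
    simp only [hS, Finset.mem_product, Finset.mem_range, Finset.mem_Icc] at hp
    exact ⟨hp.1.1, hp.1.2, hp.2⟩
  have hFinj : Set.InjOn F S := by
    rintro p hp q hq h
    have hp' := hmem p hp
    have hq' := hmem q hq
    simp only [hF, Prod.map, Prod.ext_iff] at h
    have h2 : p.2 = q.2 := cast_inj_of_lt (by nlinarith [hp'.2.2]) (by nlinarith [hq'.2.2]) h.2
    have h1 : p.1 * a = q.1 * a := cast_inj_of_lt
      (by nlinarith [hp'.2.1]) (by nlinarith [hq'.2.1]) h.1
    have h3 : p.1 = q.1 := Nat.eq_of_mul_eq_mul_right ha h1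
    exact Prod.ext h3 h2
  rw [Finset.filter_image, Finset.card_image_of_injOn
    (hFinj.mono (by exact_mod_cast Finset.filter_subset _ S))]
  set f : ℕ × ℕ → ZMod (a * b + 1) := fun p => ((phi a p : ℕ) : ZMod (a * b + 1)) with hf
  have hcond : ∀ p ∈ S, ((F p).1 - (F p).2 = g ↔ f p = g) := by
    intro p hp
    have hb' := phi_bounds ha (by simpa [hS] using hp)
    have : ((phi a p : ℕ) : ZMod (a * b + 1))
        = ((p.1 * a : ℕ) : ZMod (a * b + 1)) - ((p.2 : ℕ) : ZMod (a * b + 1)) := by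
      unfold phi
      rw [Nat.cast_sub hb'.2.2]
    simp only [hF, Prod.map, hf]
    rw [this]
  rw [Finset.filter_congr hcond]
  have hphilt : ∀ p ∈ S, phi a p < a * b + 1 ∧ 1 ≤ phi a p := by
    intro p hp
    have := phi_bounds ha (by simpa [hS] using hp)
    omega
  have hfinj : Set.InjOn f S := by
    intro p hp q hq h
    exact phi_inj ha hp hq
      (cast_inj_of_lt (hphilt p hp).1 (hphilt q hq).1 h)
  have hf0 : ∀ p ∈ S, f p ≠ 0 := by
    intro p hp h
    have h0 : phi a p = 0 :=
      cast_inj_of_lt (hphilt p hp).1 (by omega) (by simpa using h)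
    have := (hphilt p hp).2
    omega
  have hcardS : S.card = Fintype.card (ZMod (a * b + 1)) - 1 := by
    rw [ZMod.card]
    simp [hS, Finset.card_product, Nat.mul_comm]
  have himg : S.image f = Finset.univ.erase 0 := image_eq_erase_zero hfinj hf0 hcardS
  have hgmem : g ∈ S.image f := by
    rw [himg]
    exact Finset.mem_erase.2 ⟨hg, Finset.mem_univ _⟩
  obtain ⟨p, hp, hpg⟩ := Finset.mem_image.1 hgmem
  rw [← hpg]
  exact filter_card_one hfinj hp

/-- `D₁ = {0, 1, ..., a-1}` and `D₂ = {a, 2a, ..., ba}` form an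
`(ab+1, 2; a, b; 1, 1)`-GSEDF in `ℤ_{ab+1}`. -/
theorem gsedf_ab_plus_one (a b : ℕ) (ha : 0 < a) (hb : 0 < b) :
    IsGSEDF (a * b + 1) 2
      ![(Finset.range a).image (Nat.cast : ℕ → ZMod (a * b + 1)),
        (Finset.Icc 1 b).image (fun i => ((i * a : ℕ) : ZMod (a * b + 1)))]
      ![a, b] ![1, 1] := by
  have hcast1 : Set.InjOn (Nat.cast : ℕ → ZMod (a * b + 1)) (Finset.range a) := by
    intro x hx y hy h
    simp only [Finset.coe_range, Set.mem_Iio] at hx hy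
    exact cast_inj_of_lt (by nlinarith) (by nlinarith) h
  have hcast2 : Set.InjOn (fun i => ((i * a : ℕ) : ZMod (a * b + 1))) (Finset.Icc 1 b) := by
    intro x hx y hy h
    simp only [Finset.coe_Icc, Set.mem_Icc] at hx hy
    have := cast_inj_of_lt (n := a * b + 1) (x := x * a) (y := y * a)
      (by nlinarith [hx.2]) (by nlinarith [hy.2]) h
    exact Nat.eq_of_mul_eq_mul_right ha this
  refine ⟨?_, ?_, ?_, ?_, ?_, ?_⟩
  · exact ZMod.card (a * b + 1)
  · intro i
    fin_cases i
    · simp [Finset.card_image_of_injOn hcast1]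
    · simp only [Fin.mk_one, Matrix.cons_val_one, Matrix.head_cons, Matrix.cons_val_zero]
      rw [Finset.card_image_of_injOn hcast2, Nat.card_Icc]
      omega
  · intro i; fin_cases i <;> simpa
  · intro i; fin_cases i <;> simp
  · intro i j hij
    have key : Disjoint ((Finset.range a).image (Nat.cast : ℕ → ZMod (a * b + 1)))
        ((Finset.Icc 1 b).image (fun i => ((i * a : ℕ) : ZMod (a * b + 1)))) := by
      rw [Finset.disjoint_left]
      rintro z hz1 hz2
      obtain ⟨x, hx, rfl⟩ := Finset.mem_image.1 hz1
      obtain ⟨y, hy, hyx⟩ := Finset.mem_image.1 hz2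
      simp only [Finset.mem_range, Finset.mem_Icc] at hx hy
      have : y * a = x := cast_inj_of_lt (by nlinarith [hy.2]) (by nlinarith) hyx
      nlinarith [hy.1]
    fin_cases i <;> fin_cases j <;>
      simp only [Fin.mk_zero, Fin.mk_one, Matrix.cons_val_zero, Matrix.cons_val_one,
        Matrix.head_cons] <;>
      first
        | exact absurd rfl hij
        | exact key
        | exact key.symm
  · have hfilt0 : Finset.univ.filter (· ≠ (0 : Fin 2)) = {1} := by decide
    have hfilt1 : Finset.univ.filter (· ≠ (1 : Fin 2)) = {0} := by decide
    rw [Fin.forall_fin_two]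
    constructor
    · intro g hg
      rw [hfilt0, Finset.sum_singleton]
      simpa using count12 a b ha hb g hg
    · intro g hg
      rw [hfilt1, Finset.sum_singleton]
      simpa using count21 a b ha hb g hg
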